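/- Define E₁ = {((2k−1)/2ⁿ, (2k−1)/2ⁿ + 1/2^{n+1}) : k = 1,…,2^{n−1}, n ∈ ℕ} ⊆ [0,1]², E₂ = {(x,x) : x ∈ [0,1]}, and E = E₁ ∪ E₂. Then E is a closed subset of [0,1]² and every vertical section E ∩ ({x} × [0,1]) and every horizontal section E ∩ ([0,1] × {y}) contains at most 2 points. -/

import Mathlib

open Set

def E1 : Set (ℝ × ℝ) :=
  {p | ∃ n k : ℕ, 1 ≤ n ∧ 1 ≤ k ∧ k ≤ 2 ^ (n - 1) ∧
    p.1 = (2 * (k : ℝ) - 1) / 2 ^ n ∧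
    p.2 = (2 * (k : ℝ) - 1) / 2 ^ n + 1 / 2 ^ (n + 1)}

def E2 : Set (ℝ × ℝ) := {p | p.1 ∈ Icc (0:ℝ) 1 ∧ p.2 = p.1}

lemma keyNatHalf (m d a b : ℕ) (ha : 1 ≤ a) (hb : 1 ≤ b)
    (h : (2*a-1)*2^(m+d) = (2*b-1)*2^m) : d = 0 ∧ a = b := by
  have hpos : 0 < 2^m := Nat.pow_pos (by norm_num)
  have h2 : (2*a-1)*2^d = 2*b-1 := by
    have : ((2*a-1)*2^d)*2^m = (2*b-1)*2^m := by rw [← h, pow_add]; ring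
    exact Nat.eq_of_mul_eq_mul_right hpos this
  rcases Nat.eq_zero_or_pos d with rfl | hd
  · simp at h2; exact ⟨rfl, by omega⟩
  · exfalso
    have : 2 ∣ (2*a-1)*2^d := Dvd.dvd.mul_left (dvd_pow_self 2 (by omega)) _
    omega

lemma keyNat (m n a b : ℕ) (ha : 1 ≤ a) (hb : 1 ≤ b)
    (h : (2*a-1)*2^n = (2*b-1)*2^m) : m = n ∧ a = b := by
  rcases le_total m n with hmn | hmn
  · obtain ⟨d, rfl⟩ := Nat.exists_eq_add_of_le hmn
    have := keyNatHalf m d a b ha hb h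
    exact ⟨by omega, this.2⟩
  · obtain ⟨d, rfl⟩ := Nat.exists_eq_add_of_le hmn
    have := keyNatHalf n d b a hb ha h.symm
    exact ⟨by omega, (this.2).symm⟩

lemma keyReal (m n a b : ℕ) (ha : 1 ≤ a) (hb : 1 ≤ b)
    (h : (2*(a:ℝ)-1)/2^m = (2*(b:ℝ)-1)/2^n) : m = n ∧ a = b := by
  have hm : (2:ℝ)^m ≠ 0 := by positivity
  have hn : (2:ℝ)^n ≠ 0 := by positivity
  rw [div_eq_div_iff hm hn] at h
  have hcast : ((2*a-1)*2^n : ℕ) = ((2*b-1)*2^m : ℕ) := by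
    have h1 : ((2*a-1 : ℕ) : ℝ) = 2*(a:ℝ)-1 := by
      push_cast [Nat.cast_sub (by omega : 1 ≤ 2*a)]; ring
    have h2 : ((2*b-1 : ℕ) : ℝ) = 2*(b:ℝ)-1 := by
      push_cast [Nat.cast_sub (by omega : 1 ≤ 2*b)]; ring
    have : (((2*a-1)*2^n : ℕ) : ℝ) = (((2*b-1)*2^m : ℕ) : ℝ) := by
      push_cast [h1, h2]; exact h
    exact_mod_cast this
  exact keyNat m n a b ha hb hcast

lemma E1_y (n k : ℕ) :
    (2 * (k : ℝ) - 1) / 2 ^ n + 1 / 2 ^ (n + 1) = (2 * ((2*k : ℕ) : ℝ) - 1) / 2 ^ (n+1) := by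
  have : (2:ℝ)^(n+1) = 2^n * 2 := by ring
  push_cast
  field_simp
  ring

lemma E1_vert {x y y' : ℝ} (h : (x,y) ∈ E1) (h' : (x,y') ∈ E1) : y = y' := by
  obtain ⟨n, k, _, hk, _, hx, hy⟩ := h
  obtain ⟨n', k', _, hk', _, hx', hy'⟩ := h'
  simp only at hx hy hx' hy'
  obtain ⟨rfl, rfl⟩ := keyReal n n' k k' hk hk' (hx ▸ hx')
  rw [hy, hy']

lemma E1_horiz {x x' y : ℝ} (h : (x,y) ∈ E1) (h' : (x',y) ∈ E1) : x = x' := by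
  obtain ⟨n, k, _, hk, _, hx, hy⟩ := h
  obtain ⟨n', k', _, hk', _, hx', hy'⟩ := h'
  simp only at hx hy hx' hy'
  rw [E1_y] at hy hy'
  have := keyReal (n+1) (n'+1) (2*k) (2*k') (by omega) (by omega) (hy ▸ hy')
  obtain ⟨h1, h2⟩ := this
  have hnn : n = n' := by omega
  have hkk : k = k' := by omega
  subst hnn hkk
  rw [hx, hx']

lemma E1_bounds {p : ℝ × ℝ} (h : p ∈ E1) :
    0 < p.1 ∧ p.2 ≤ 1 ∧ p.1 < p.2 := by
  obtain ⟨n, k, hn, hk, hkle, hx, hy⟩ := h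
  have h2n : (0:ℝ) < 2^n := by positivity
  have hk1 : (1:ℝ) ≤ (k:ℝ) := by exact_mod_cast hk
  have hkle' : (k:ℝ) ≤ 2^(n-1) := by exact_mod_cast hkle
  have hpow : (2:ℝ)^(n-1) * 2 = 2^n := by
    rw [← pow_succ]; congr 1; omega
  refine ⟨?_, ?_, ?_⟩
  · rw [hx]; apply div_pos (by linarith) h2n
  · rw [hy]
    have h21 : (2:ℝ)^(n+1) = 2^n * 2 := by ring
    rw [div_add_div _ _ (ne_of_gt h2n) (by positivity : (2:ℝ)^(n+1) ≠ 0)]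
    rw [div_le_one (by positivity)]
    rw [h21]
    nlinarith
  · rw [hx, hy]
    have : (0:ℝ) < 1 / 2^(n+1) := by positivity
    linarith

lemma E1_closure : closure E1 ⊆ E1 ∪ E2 := by
  intro p hp
  -- p lies in the closed set C
  have hC : IsClosed {q : ℝ × ℝ | 0 ≤ q.1 ∧ q.1 ≤ q.2 ∧ q.2 ≤ 1} := by
    apply IsClosed.inter (isClosed_le continuous_const continuous_fst)
    exact IsClosed.inter (isClosed_le continuous_fst continuous_snd)
      (isClosed_le continuous_snd continuous_const)
  have hE1C : E1 ⊆ {q : ℝ × ℝ | 0 ≤ q.1 ∧ q.1 ≤ q.2 ∧ q.2 ≤ 1} := by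
    intro q hq
    obtain ⟨h1, h2, h3⟩ := E1_bounds hq
    exact ⟨le_of_lt h1, le_of_lt h3, h2⟩
  have hpC : p ∈ {q : ℝ × ℝ | 0 ≤ q.1 ∧ q.1 ≤ q.2 ∧ q.2 ≤ 1} :=
    closure_minimal hE1C hC hp
  obtain ⟨hp0, hp12, hp1⟩ := hpC
  rcases eq_or_lt_of_le hp12 with heq | hlt
  · right
    exact ⟨⟨hp0, heq ▸ hp1⟩, heq.symm⟩
  · -- p is away from the diagonal
    left
    set ε : ℝ := p.2 - p.1 with hε
    have hεpos : 0 < ε := by simp [hε]; linarith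
    obtain ⟨N, hN⟩ := exists_pow_lt_of_lt_one (half_pos hεpos)
      (by norm_num : (1:ℝ)/2 < 1)
    set f : ℕ × ℕ → ℝ × ℝ := fun nk =>
      ((2*(nk.2:ℝ)-1)/2^nk.1, (2*(nk.2:ℝ)-1)/2^nk.1 + 1/2^(nk.1+1)) with hf
    set S : Set (ℝ × ℝ) :=
      f '' {nk | nk.1 ≤ N ∧ 1 ≤ nk.1 ∧ 1 ≤ nk.2 ∧ nk.2 ≤ 2^(nk.1 - 1)} with hS
    have hSfin : S.Finite := by
      apply Set.Finite.image
      apply Set.Finite.subset ((Set.finite_Iic N).prod (Set.finite_Iic (2^N)))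
      rintro ⟨n, k⟩ ⟨h1, h2, h3, h4⟩
      refine ⟨h1, ?_⟩
      simp only [Set.mem_Iic]
      calc k ≤ 2^(n-1) := h4
        _ ≤ 2^N := Nat.pow_le_pow_right (by norm_num) (by omega)
    have hSE1 : S ⊆ E1 := by
      rintro q ⟨⟨n, k⟩, ⟨h1, h2, h3, h4⟩, rfl⟩
      exact ⟨n, k, h2, h3, h4, rfl, rfl⟩
    set T : Set (ℝ × ℝ) := {q | q.2 - q.1 ≤ ε/2} with hT
    have hTc : IsClosed T :=
      isClosed_le (continuous_snd.sub continuous_fst) continuous_const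
    have hsub : E1 ⊆ S ∪ T := by
      rintro q ⟨n, k, hn, hk, hkle, hx, hy⟩
      by_cases hnN : n ≤ N
      · left
        refine ⟨(n, k), ⟨hnN, hn, hk, hkle⟩, ?_⟩
        simp only [hf]
        ext
        · exact hx.symm
        · exact hy.symm
      · right
        have hq : q.2 - q.1 = 1/2^(n+1) := by rw [hx, hy]; ring
        have h1 : (1:ℝ)/2^(n+1) ≤ (1/2)^N := by
          rw [div_pow, one_pow]
          apply div_le_div_of_nonneg_left (by norm_num) (by positivity)
          exact pow_le_pow_right₀ (by norm_num) (by omega)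
        simp only [hT, Set.mem_setOf_eq]
        rw [hq]
        linarith
    have hclos : closure E1 ⊆ S ∪ T :=
      closure_minimal hsub (hSfin.isClosed.union hTc)
    have hpST := hclos hp
    rcases hpST with hpS | hpT
    · exact hSE1 hpS
    · exfalso
      simp only [hT, Set.mem_setOf_eq] at hpT
      linarith

theorem stmt15 :
    (E1 ∪ E2) ⊆ (Icc (0:ℝ) 1) ×ˢ (Icc (0:ℝ) 1) ∧
    IsClosed (E1 ∪ E2) ∧
    (∀ x : ℝ, ∀ y₁ y₂ y₃ : ℝ, (x, y₁) ∈ E1 ∪ E2 → (x, y₂) ∈ E1 ∪ E2 →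
      (x, y₃) ∈ E1 ∪ E2 → y₁ = y₂ ∨ y₁ = y₃ ∨ y₂ = y₃) ∧
    (∀ y : ℝ, ∀ x₁ x₂ x₃ : ℝ, (x₁, y) ∈ E1 ∪ E2 → (x₂, y) ∈ E1 ∪ E2 →
      (x₃, y) ∈ E1 ∪ E2 → x₁ = x₂ ∨ x₁ = x₃ ∨ x₂ = x₃) := by
  have hE2c : IsClosed E2 := by
    have : E2 = {q : ℝ × ℝ | q.1 ∈ Icc (0:ℝ) 1} ∩ {q | q.2 = q.1} := rfl
    rw [this]
    exact (isClosed_Icc.preimage continuous_fst).inter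
      (isClosed_eq continuous_snd continuous_fst)
  refine ⟨?_, ?_, ?_, ?_⟩
  · rintro p (hp | hp)
    · obtain ⟨h1, h2, h3⟩ := E1_bounds hp
      exact ⟨⟨le_of_lt h1, by linarith⟩, ⟨by linarith, h2⟩⟩
    · obtain ⟨h1, h2⟩ := hp
      exact ⟨h1, h2 ▸ h1⟩
  · rw [← closure_eq_iff_isClosed]
    apply Subset.antisymm _ subset_closure
    rw [closure_union, hE2c.closure_eq]
    exact union_subset E1_closure subset_union_right
  · intro x y₁ y₂ y₃ h1 h2 h3
    rcases h1 with h1 | h1 <;> rcases h2 with h2 | h2 <;> rcases h3 with h3 | h3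
    · exact Or.inl (E1_vert h1 h2)
    · exact Or.inl (E1_vert h1 h2)
    · exact Or.inr (Or.inl (E1_vert h1 h3))
    · exact Or.inr (Or.inr (h2.2.trans h3.2.symm))
    · exact Or.inr (Or.inr (E1_vert h2 h3))
    · exact Or.inr (Or.inl (h1.2.trans h3.2.symm))
    · exact Or.inl (h1.2.trans h2.2.symm)
    · exact Or.inl (h1.2.trans h2.2.symm)
  · intro y x₁ x₂ x₃ h1 h2 h3
    rcases h1 with h1 | h1 <;> rcases h2 with h2 | h2 <;> rcases h3 with h3 | h3
    · exact Or.inl (E1_horiz h1 h2)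
    · exact Or.inl (E1_horiz h1 h2)
    · exact Or.inr (Or.inl (E1_horiz h1 h3))
    · exact Or.inr (Or.inr (h2.2.symm.trans h3.2))
    · exact Or.inr (Or.inr (E1_horiz h2 h3))
    · exact Or.inr (Or.inl (h1.2.symm.trans h3.2))
    · exact Or.inl (h1.2.symm.trans h2.2)
    · exact Or.inl (h1.2.symm.trans h2.2)
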